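/- Among all connected graphs G on n vertices with chromatic number χ (2 ≤ χ ≤ n − 1, n ≥ 3), the minimum of the largest distance Laplacian eigenvalue ∂^L_1(G) equals n + ⌈n/χ⌉, and it is attained by any complete χ-partite graph all of whose part sizes lie in {⌊n/χ⌋, ⌈n/χ⌉}. -/

import Mathlib

open Finset

/-- Transmission of a vertex: sum of distances to all vertices. -/
noncomputable def transmission {n : ℕ} (G : SimpleGraph (Fin n)) (v : Fin n) : ℕ :=
  ∑ u : Fin n, G.dist u v

/-- The distance Laplacian matrix `DL(G) = Tr(G) − D(G)`. -/
noncomputable def distLap {n : ℕ} (G : SimpleGraph (Fin n)) : Matrix (Fin n) (Fin n) ℝ :=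
  Matrix.diagonal (fun v => (transmission G v : ℝ)) -
    Matrix.of (fun u v => (G.dist u v : ℝ))

/-- `DLeig G i` is the `i`-th largest distance Laplacian eigenvalue of `G`
(1-indexed, counted with algebraic multiplicity): the eigenvalues are the roots
of the characteristic polynomial of `DL(G)`, sorted in nonincreasing order. -/
noncomputable def DLeig {n : ℕ} (G : SimpleGraph (Fin n)) (i : ℕ) : ℝ :=
  (((distLap G).charpoly.roots).sort (· ≥ ·)).getD (i - 1) 0

section Aux
open Polynomial Matrix





lemma charpoly_conj_eq {m : ℕ} (U D V : Matrix (Fin m) (Fin m) ℝ) (h1 : U * V = 1) (h2 : V * U = 1) :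
    (U * D * V).charpoly = D.charpoly := by
  have hmap : ∀ M N : Matrix (Fin m) (Fin m) ℝ, (M * N).map (C : ℝ →+* ℝ[X]) =
      M.map C * N.map C := fun M N => by
    simpa using (RingHom.mapMatrix (C : ℝ →+* ℝ[X])).map_mul M N
  have hUV : U.map (C : ℝ →+* ℝ[X]) * V.map C = 1 := by
    rw [← hmap, h1]; simp [Matrix.map_one]
  have hVU : V.map (C : ℝ →+* ℝ[X]) * U.map C = 1 := by
    rw [← hmap, h2]; simp [Matrix.map_one]
  have key : charmatrix (U * D * V) = U.map C * charmatrix D * V.map C := by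
    unfold charmatrix
    rw [mul_sub, sub_mul]
    congr 1
    · rw [scalar_apply]
      have hU : U.map (C : ℝ →+* ℝ[X]) * diagonal (fun _ => (X:ℝ[X])) = (X:ℝ[X]) • U.map (C : ℝ →+* ℝ[X]) := by
        ext i j
        rw [Matrix.mul_diagonal, Matrix.smul_apply, smul_eq_mul, mul_comm]
      rw [hU, Matrix.smul_mul, hUV]
      ext i j
      rw [Matrix.smul_apply, Matrix.one_apply, diagonal_apply]
      split <;> simp
    · simp only [RingHom.mapMatrix_apply]
      rw [hmap, hmap]
  unfold Matrix.charpoly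
  rw [key, det_mul, det_mul, mul_comm (U.map C).det, mul_assoc, ← det_mul, hUV, det_one, mul_one]

lemma charpoly_diagonal_real {m : ℕ} (d : Fin m → ℝ) :
    (diagonal d).charpoly = ∏ i, (X - C (d i)) := by
  unfold Matrix.charpoly
  have : charmatrix (diagonal d) = diagonal (fun i => (X : ℝ[X]) - C (d i)) := by
    ext i j
    by_cases h : i = j
    · subst h; simp
    · rw [charmatrix_apply_ne _ _ _ h, diagonal_apply_ne _ h, diagonal_apply_ne _ h]
      simp
  rw [this, det_diagonal]

lemma herm_charpoly_eq {m : ℕ} {A : Matrix (Fin m) (Fin m) ℝ} (hA : A.IsHermitian) :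
    A.charpoly = ∏ i, (X - C (hA.eigenvalues i)) := by
  have hU := (Matrix.mem_unitaryGroup_iff).mp (hA.eigenvectorUnitary).2
  have hU' := (Matrix.mem_unitaryGroup_iff').mp (hA.eigenvectorUnitary).2
  calc A.charpoly
      = ((hA.eigenvectorUnitary : Matrix (Fin m) (Fin m) ℝ) *
          diagonal (RCLike.ofReal ∘ hA.eigenvalues) *
          (star (hA.eigenvectorUnitary : Matrix (Fin m) (Fin m) ℝ))).charpoly := by
        exact congrArg Matrix.charpoly hA.spectral_theorem
    _ = (diagonal (RCLike.ofReal ∘ hA.eigenvalues)).charpoly :=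
        charpoly_conj_eq _ _ _ hU hU'
    _ = ∏ i, (X - C (hA.eigenvalues i)) := by
        rw [show (RCLike.ofReal ∘ hA.eigenvalues : Fin m → ℝ) = hA.eigenvalues from rfl]
        exact charpoly_diagonal_real _

lemma herm_roots_charpoly {m : ℕ} {A : Matrix (Fin m) (Fin m) ℝ} (hA : A.IsHermitian) :
    A.charpoly.roots = Multiset.map hA.eigenvalues Finset.univ.val := by
  rw [herm_charpoly_eq hA]
  rw [Finset.prod_eq_multiset_prod]
  rw [show Multiset.map (fun i => X - C (hA.eigenvalues i)) Finset.univ.val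
      = Multiset.map (fun a => X - C a) (Multiset.map hA.eigenvalues Finset.univ.val) by
    rw [Multiset.map_map]; rfl]
  exact roots_multiset_prod_X_sub_C _

lemma sort_getD_mem (s : Multiset ℝ) (h : s ≠ 0) : (s.sort (· ≥ ·)).getD 0 0 ∈ s := by
  have hl : s.sort (· ≥ ·) ≠ [] := by
    intro hnil
    apply h
    have := Multiset.sort_eq s (· ≥ ·)
    rw [hnil] at this
    exact (by simpa using this.symm)
  cases hls : s.sort (· ≥ ·) with
  | nil => exact absurd hls hl
  | cons a t =>
    have : a ∈ s.sort (· ≥ ·) := by rw [hls]; exact List.mem_cons_self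
    rw [Multiset.mem_sort] at this
    simpa [hls] using this

lemma le_sort_getD (s : Multiset ℝ) {x : ℝ} (hx : x ∈ s) :
    x ≤ (s.sort (· ≥ ·)).getD 0 0 := by
  have hsort : List.Pairwise (· ≥ ·) (s.sort (· ≥ ·)) := Multiset.pairwise_sort s _
  have hx' : x ∈ s.sort (· ≥ ·) := (Multiset.mem_sort _).mpr hx
  cases hls : s.sort (· ≥ ·) with
  | nil => rw [hls] at hx'; simp at hx'
  | cons a t =>
    rw [hls] at hx' hsort
    rcases List.mem_cons.mp hx' with h | h
    · simp [hls, h]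
    · simpa [hls] using List.rel_of_pairwise_cons hsort h

lemma star_unitary_real {m : ℕ} (U : Matrix (Fin m) (Fin m) ℝ) : star U = Uᵀ := by
  ext i j; simp [Matrix.star_apply]

lemma dotProduct_self_pos {m : ℕ} {x : Fin m → ℝ} (hx : x ≠ 0) : 0 < x ⬝ᵥ x := by
  have h0 : (0:ℝ) ≤ x ⬝ᵥ x := Finset.sum_nonneg fun i _ => mul_self_nonneg _
  rcases h0.lt_or_eq with h | h
  · exact h
  · exfalso
    apply hx
    funext i
    have := Finset.sum_eq_zero_iff_of_nonneg (fun j (_ : j ∈ Finset.univ) => mul_self_nonneg (x j)) |>.mp h.symm i (Finset.mem_univ i)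
    have := mul_self_eq_zero.mp this
    simpa using this

lemma rayleigh_le_maxRoot {m : ℕ} {A : Matrix (Fin m) (Fin m) ℝ} (hA : A.IsHermitian)
    (x : Fin m → ℝ) :
    x ⬝ᵥ (A *ᵥ x) ≤ ((A.charpoly.roots.sort (· ≥ ·)).getD 0 0) * (x ⬝ᵥ x) := by
  set r : ℝ := (A.charpoly.roots.sort (· ≥ ·)).getD 0 0 with hr
  have heig : ∀ i, hA.eigenvalues i ≤ r := by
    intro i
    apply le_sort_getD
    rw [herm_roots_charpoly hA]
    exact Multiset.mem_map_of_mem _ (Finset.mem_univ i)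
  set U : Matrix (Fin m) (Fin m) ℝ := (hA.eigenvectorUnitary : Matrix (Fin m) (Fin m) ℝ) with hUdef
  have hU : U * star U = 1 := (Matrix.mem_unitaryGroup_iff).mp (hA.eigenvectorUnitary).2
  set y : Fin m → ℝ := Uᵀ *ᵥ x with hy
  have hdiag : A = U * diagonal hA.eigenvalues * star U := by
    have := hA.spectral_theorem
    rw [show (diagonal (RCLike.ofReal ∘ hA.eigenvalues) : Matrix (Fin m) (Fin m) ℝ)
        = diagonal hA.eigenvalues from rfl] at this
    exact this
  have h1 : x ⬝ᵥ (A *ᵥ x) = y ⬝ᵥ (diagonal hA.eigenvalues *ᵥ y) := by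
    have e1 := congrArg (fun M : Matrix (Fin m) (Fin m) ℝ => x ⬝ᵥ (M *ᵥ x)) hdiag
    rw [e1, star_unitary_real, ← Matrix.mulVec_mulVec, ← Matrix.mulVec_mulVec,
      Matrix.dotProduct_mulVec, ← Matrix.mulVec_transpose]
  have h2 : y ⬝ᵥ y = x ⬝ᵥ x := by
    rw [hy, Matrix.dotProduct_mulVec, ← Matrix.mulVec_transpose, Matrix.transpose_transpose,
      Matrix.mulVec_mulVec]
    rw [← star_unitary_real, hU, Matrix.one_mulVec]
  have h3 : y ⬝ᵥ (diagonal hA.eigenvalues *ᵥ y) = ∑ i, hA.eigenvalues i * (y i)^2 := by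
    unfold dotProduct
    congr 1
    funext i
    rw [Matrix.mulVec_diagonal]
    ring
  rw [h1, h3, ← h2]
  have : y ⬝ᵥ y = ∑ i, (y i)^2 := by
    unfold dotProduct; congr 1; funext i; ring
  rw [this, Finset.mul_sum]
  apply Finset.sum_le_sum
  intro i _
  exact mul_le_mul_of_nonneg_right (heig i) (sq_nonneg _)

lemma maxRoot_le_of_quadform {m : ℕ} {A : Matrix (Fin m) (Fin m) ℝ} (hm : 0 < m) (hA : A.IsHermitian)
    (r : ℝ) (hq : ∀ x : Fin m → ℝ, x ⬝ᵥ (A *ᵥ x) ≤ r * (x ⬝ᵥ x)) :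
    ((A.charpoly.roots.sort (· ≥ ·)).getD 0 0) ≤ r := by
  have hne : A.charpoly.roots ≠ 0 := by
    rw [herm_roots_charpoly hA]
    simp only [ne_eq, Multiset.map_eq_zero]
    intro h
    have hcard : Multiset.card (Finset.univ.val : Multiset (Fin m)) = m := by simp
    rw [h] at hcard
    simp at hcard
    omega
  set t : ℝ := (A.charpoly.roots.sort (· ≥ ·)).getD 0 0 with ht
  have hmem := sort_getD_mem _ hne
  rw [herm_roots_charpoly hA] at hmem
  obtain ⟨i, _, hi⟩ := Multiset.mem_map.mp hmem
  rw [← herm_roots_charpoly hA] at hi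
  rw [ht, ← hi]
  set v : Fin m → ℝ := ⇑(hA.eigenvectorBasis i) with hv
  have hvne : v ≠ 0 := by
    have := hA.eigenvectorBasis.orthonormal.ne_zero i
    intro h
    apply this
    ext j
    exact congrFun h j
  have hev : A *ᵥ v = hA.eigenvalues i • v := hA.mulVec_eigenvectorBasis i
  have hpos : 0 < v ⬝ᵥ v := dotProduct_self_pos hvne
  have : hA.eigenvalues i * (v ⬝ᵥ v) ≤ r * (v ⬝ᵥ v) := by
    have := hq v
    rwa [hev, dotProduct_smul, smul_eq_mul] at this
  exact le_of_mul_le_mul_right this hpos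
variable {n : ℕ} {G : SimpleGraph (Fin n)}

lemma distLap_apply (u v : Fin n) :
    distLap G u v = (if u = v then (transmission G u : ℝ) else 0) - G.dist u v := by
  simp [distLap, Matrix.sub_apply, Matrix.diagonal_apply]

lemma distLap_isHermitian : (distLap G).IsHermitian := by
  unfold Matrix.IsHermitian
  ext i j
  simp only [Matrix.conjTranspose_apply, star_trivial]
  rw [distLap_apply, distLap_apply, SimpleGraph.dist_comm]
  by_cases h : i = j
  · subst h; simp
  · simp [h, Ne.symm h]

lemma quadform_single (u v : Fin n) (huv : u ≠ v) :
    (Pi.single u 1 - Pi.single v 1 : Fin n → ℝ) ⬝ᵥ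
      (distLap G *ᵥ (Pi.single u 1 - Pi.single v 1 : Fin n → ℝ)) =
    (transmission G u : ℝ) + transmission G v + 2 * G.dist u v := by
  rw [Matrix.mulVec_sub, Matrix.mulVec_single_one, Matrix.mulVec_single_one]
  rw [sub_dotProduct, single_dotProduct, single_dotProduct]
  simp only [Pi.sub_apply, mul_one, Matrix.col_apply]
  rw [distLap_apply, distLap_apply, distLap_apply, distLap_apply]
  rw [SimpleGraph.dist_comm (u := v) (v := u)]
  simp only [if_pos rfl, if_neg huv, if_neg (Ne.symm huv), SimpleGraph.dist_self]
  push_cast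
  ring

lemma dotsq_single (u v : Fin n) (huv : u ≠ v) :
    (Pi.single u 1 - Pi.single v 1 : Fin n → ℝ) ⬝ᵥ (Pi.single u 1 - Pi.single v 1 : Fin n → ℝ)
      = 2 := by
  rw [sub_dotProduct, single_dotProduct, single_dotProduct]
  simp [Pi.single_apply, huv, Ne.symm huv]
  norm_num

lemma dist_ge_two (hc : G.Connected) {u v : Fin n} (huv : u ≠ v) (hna : ¬ G.Adj u v) :
    2 ≤ G.dist u v := by
  have h1 : 0 < G.dist u v := hc.pos_dist_of_ne huv
  have h2 : G.dist u v ≠ 1 := fun h => hna (SimpleGraph.dist_eq_one_iff_adj.mp h)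
  omega

lemma transmission_cast (u : Fin n) :
    (transmission G u : ℝ) = ∑ w : Fin n, (G.dist w u : ℝ) := by
  unfold transmission; push_cast; rfl

lemma transmission_lower {χ : ℕ} (hc : G.Connected) (f : Fin n → Fin χ)
    (hf : ∀ {a b : Fin n}, G.Adj a b → f a ≠ f b) (u : Fin n) :
    (n : ℝ) + (univ.filter (fun w => f w = f u)).card - 2 ≤ transmission G u := by
  rw [transmission_cast]
  have key : ∀ w : Fin n,
      (1 : ℝ) + (if f w = f u then 1 else 0) - 2 * (if w = u then 1 else 0)
        ≤ G.dist w u := by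
    intro w
    by_cases hwu : w = u
    · subst hwu; simp [SimpleGraph.dist_self]; norm_num
    · by_cases hfw : f w = f u
      · have hna : ¬ G.Adj w u := fun h => hf h hfw
        have := dist_ge_two hc hwu hna
        have : (2 : ℝ) ≤ G.dist w u := by exact_mod_cast this
        simp [hfw, hwu]; linarith
      · have := hc.pos_dist_of_ne hwu
        have : (1 : ℝ) ≤ G.dist w u := by exact_mod_cast this
        simp [hfw, hwu]; linarith
  calc (n : ℝ) + (univ.filter (fun w => f w = f u)).card - 2
      = ∑ w : Fin n, ((1 : ℝ) + (if f w = f u then 1 else 0) - 2 * (if w = u then 1 else 0)) := by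
        rw [Finset.sum_sub_distrib, Finset.sum_add_distrib]
        rw [Finset.sum_boole]
        rw [← Finset.mul_sum, Finset.sum_ite_eq' univ u (fun _ => (1:ℝ))]
        simp [Finset.card_univ]
    _ ≤ ∑ w : Fin n, (G.dist w u : ℝ) := Finset.sum_le_sum (fun w _ => key w)

lemma exists_big_class {χ : ℕ} (hn : 1 ≤ n) (hχ : 0 < χ) (f : Fin n → Fin χ) :
    ∃ c : Fin χ, (n + χ - 1) / χ ≤ (univ.filter (fun v => f v = c)).card := by
  by_contra hcon
  push_neg at hcon
  set s := (n + χ - 1) / χ with hs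
  have hs1 : 1 ≤ s := (Nat.le_div_iff_mul_le hχ).mpr (by omega)
  have hsm : s * χ ≤ n + χ - 1 := Nat.div_mul_le_self _ _
  have hsum : ∑ c : Fin χ, (univ.filter (fun v => f v = c)).card = n := by
    have := Finset.card_eq_sum_card_fiberwise
      (fun (x : Fin n) (_ : x ∈ univ) => Finset.mem_univ (f x))
    simpa [Finset.card_univ] using this.symm
  have hle : n ≤ ∑ _c : Fin χ, (s - 1) := by
    rw [← hsum]
    exact Finset.sum_le_sum fun c _ => Nat.le_sub_one_of_lt (hcon c)
  rw [Finset.sum_const, Finset.card_univ, Fintype.card_fin, smul_eq_mul] at hle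
  obtain ⟨t, ht⟩ := Nat.exists_eq_add_of_le hs1
  rw [ht] at hle hsm
  simp only [Nat.add_sub_cancel_left] at hle
  rw [add_mul, one_mul] at hsm
  rw [mul_comm] at hle
  generalize t * χ = K at hle hsm
  omega

theorem part1 {χ : ℕ} (hn : 3 ≤ n) (hχ2 : 2 ≤ χ) (hχn : χ ≤ n - 1)
    (hc : G.Connected) (hchrom : G.chromaticNumber = χ) :
    (n : ℝ) + (((n + χ - 1) / χ : ℕ) : ℝ) ≤ DLeig G 1 := by
  have hχ : 0 < χ := by omega
  have hcol : G.Colorable χ := SimpleGraph.chromaticNumber_le_iff_colorable.mp (le_of_eq hchrom)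
  obtain ⟨C⟩ := hcol
  set f : Fin n → Fin χ := fun v => C v with hfdef
  have hfvalid : ∀ {a b : Fin n}, G.Adj a b → f a ≠ f b := fun hab => C.valid hab
  set s := (n + χ - 1) / χ with hs
  have hs2 : 2 ≤ s := (Nat.le_div_iff_mul_le hχ).mpr (by omega)
  obtain ⟨c, hcard⟩ := exists_big_class (by omega) hχ f
  have h2card : 1 < (univ.filter (fun v => f v = c)).card := lt_of_lt_of_le (by omega) hcard
  obtain ⟨u, hu, v, hv, huv⟩ := Finset.one_lt_card.mp h2card
  have hfu : f u = c := (Finset.mem_filter.mp hu).2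
  have hfv : f v = c := (Finset.mem_filter.mp hv).2
  have hna : ¬ G.Adj u v := fun h => hfvalid h (hfu.trans hfv.symm)
  have hd : 2 ≤ G.dist u v := dist_ge_two hc huv hna
  have hdR : (2 : ℝ) ≤ G.dist u v := by exact_mod_cast hd
  have hfilter : ∀ w : Fin n, (univ.filter (fun z => f z = f w)).card
      = (univ.filter (fun z => f z = c)).card ∨ f w ≠ c := by
    intro w
    by_cases h : f w = c
    · left; congr 1; apply Finset.filter_congr; intro z _; simp [h]
    · right; exact h
  have htu : (n : ℝ) + (univ.filter (fun z => f z = c)).card - 2 ≤ transmission G u := by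
    have := transmission_lower hc f hfvalid u
    rcases hfilter u with h | h
    · rwa [h] at this
    · exact absurd hfu h
  have htv : (n : ℝ) + (univ.filter (fun z => f z = c)).card - 2 ≤ transmission G v := by
    have := transmission_lower hc f hfvalid v
    rcases hfilter v with h | h
    · rwa [h] at this
    · exact absurd hfv h
  have hq := rayleigh_le_maxRoot (distLap_isHermitian (G := G))
    (Pi.single u 1 - Pi.single v 1 : Fin n → ℝ)
  rw [quadform_single u v huv, dotsq_single u v huv] at hq
  have hsR : (s : ℝ) ≤ (univ.filter (fun z => f z = c)).card := by exact_mod_cast hcard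
  have hM : DLeig G 1 = ((distLap G).charpoly.roots.sort (· ≥ ·)).getD 0 0 := rfl
  rw [hM]
  linarith

lemma dist_exact {χ : ℕ} (hχ2 : 2 ≤ χ) (f : Fin n → Fin χ)
    (hadj : ∀ u v, G.Adj u v ↔ f u ≠ f v)
    (hne : ∀ c : Fin χ, ∃ w, f w = c) (u v : Fin n) :
    (G.dist u v : ℝ) = 1 + (if f u = f v then 1 else 0) - 2 * (if u = v then 1 else 0) := by
  by_cases huv : u = v
  · subst huv; simp [SimpleGraph.dist_self]; norm_num
  · by_cases hf : f u = f v
    · -- distance 2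
      have hna : ¬ G.Adj u v := fun h => (hadj u v).mp h hf
      have hc : G.Connected := by
        rw [SimpleGraph.connected_iff_exists_forall_reachable]
        refine ⟨u, fun w => ?_⟩
        by_cases hw : w = u
        · subst hw; rfl
        · by_cases hfw : f u = f w
          · obtain ⟨c, hcne⟩ : ∃ c : Fin χ, c ≠ f u := by
              by_contra hcon
              push_neg at hcon
              have h0 := hcon ⟨0, by omega⟩
              have h1 := hcon ⟨1, by omega⟩
              rw [← h1] at h0
              simp [Fin.ext_iff] at h0
            obtain ⟨z, hz⟩ := hne c
            have h1 : G.Adj u z := (hadj u z).mpr (by rw [hz]; exact fun h => hcne h.symm)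
            have h2 : G.Adj z w := (hadj z w).mpr (by rw [hz, ← hfw]; exact fun h => hcne h)
            exact (h1.toWalk.append h2.toWalk).reachable
          · exact ((hadj u w).mpr hfw).toWalk.reachable
      have hge := dist_ge_two hc huv hna
      have hle : G.dist u v ≤ 2 := by
        obtain ⟨c, hcne⟩ : ∃ c : Fin χ, c ≠ f u := by
          by_contra hcon
          push_neg at hcon
          have h0 := hcon ⟨0, by omega⟩
          have h1 := hcon ⟨1, by omega⟩
          rw [← h1] at h0
          simp [Fin.ext_iff] at h0
        obtain ⟨z, hz⟩ := hne c
        have h1 : G.Adj u z := (hadj u z).mpr (by rw [hz]; exact fun h => hcne h.symm)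
        have h2 : G.Adj z v := (hadj z v).mpr (by rw [hz, ← hf]; exact fun h => hcne h)
        have := SimpleGraph.dist_le (h1.toWalk.append h2.toWalk)
        simpa using this
      have : G.dist u v = 2 := le_antisymm hle hge
      rw [this]
      simp [hf, huv]
      norm_num
    · have : G.dist u v = 1 := SimpleGraph.dist_eq_one_iff_adj.mpr ((hadj u v).mpr hf)
      rw [this]
      simp [hf, huv]

lemma quad_bound {χ : ℕ} (f : Fin n → Fin χ) (s : ℝ)
    (hdist : ∀ w z : Fin n,
      (G.dist w z : ℝ) = 1 + (if f w = f z then 1 else 0) - 2 * (if w = z then 1 else 0))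
    (hL : ∀ w : Fin n, (∑ z : Fin n, (if f z = f w then (1:ℝ) else 0)) ≤ s)
    (x : Fin n → ℝ) :
    x ⬝ᵥ (distLap G *ᵥ x) ≤ ((n : ℝ) + s) * (x ⬝ᵥ x) := by
  set L : Fin n → ℝ := fun w => ∑ z : Fin n, (if f z = f w then (1:ℝ) else 0) with hLdef
  have hTr : ∀ w, (transmission G w : ℝ) = n + L w - 2 := by
    intro w
    rw [transmission_cast]
    calc ∑ z : Fin n, (G.dist z w : ℝ)
        = ∑ z : Fin n, ((1:ℝ) + (if f z = f w then 1 else 0) - 2 * (if z = w then 1 else 0)) :=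
          Finset.sum_congr rfl fun z _ => hdist z w
      _ = (n : ℝ) + L w - 2 := by
          rw [Finset.sum_sub_distrib, Finset.sum_add_distrib, ← Finset.mul_sum,
            Finset.sum_ite_eq' univ w (fun _ => (1:ℝ))]
          simp only [Finset.sum_const, Finset.card_univ, Fintype.card_fin, nsmul_eq_mul,
            mul_one, if_pos (Finset.mem_univ w)]
          rfl
  have hrow : ∀ w, (distLap G *ᵥ x) w
      = (transmission G w : ℝ) * x w - ∑ z, (G.dist w z : ℝ) * x z := by
    intro w
    show (∑ z, distLap G w z * x z) = _
    have : ∀ z, distLap G w z * x z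
        = (if w = z then (transmission G w : ℝ) else 0) * x z - (G.dist w z : ℝ) * x z := by
      intro z; rw [distLap_apply, sub_mul]
    rw [Finset.sum_congr rfl fun z _ => this z, Finset.sum_sub_distrib]
    congr 1
    simp [ite_mul]
  have hQ : x ⬝ᵥ (distLap G *ᵥ x)
      = ∑ w, (transmission G w : ℝ) * x w ^ 2
        - ∑ w, ∑ z, (G.dist w z : ℝ) * (x w * x z) := by
    show (∑ w, x w * (distLap G *ᵥ x) w) = _
    rw [Finset.sum_congr rfl fun w _ => by rw [hrow w]]
    have hsplit : ∀ w : Fin n, x w * ((transmission G w : ℝ) * x w - ∑ z, (G.dist w z : ℝ) * x z)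
        = (transmission G w : ℝ) * x w ^ 2 - ∑ z, (G.dist w z : ℝ) * (x w * x z) := by
      intro w
      rw [mul_sub, Finset.mul_sum]
      congr 1
      · ring
      · exact Finset.sum_congr rfl fun z _ => by ring
    rw [Finset.sum_congr rfl fun w _ => hsplit w, Finset.sum_sub_distrib]
  set S : ℝ := ∑ w, x w with hS
  set X2 : ℝ := ∑ w, x w ^ 2 with hX2
  set T : Fin χ → ℝ := fun c => ∑ z, (if f z = c then x z else 0) with hT
  set E : ℝ := ∑ w, ∑ z, (if f w = f z then (1:ℝ) else 0) * (x w * x z) with hE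
  have hD : ∀ w, ∑ z, (G.dist w z : ℝ) * (x w * x z)
      = (∑ z, x w * x z) + (∑ z, (if f w = f z then (1:ℝ) else 0) * (x w * x z))
        - 2 * (x w * x w) := by
    intro w
    have hterm : ∀ z, (G.dist w z : ℝ) * (x w * x z)
        = x w * x z + (if f w = f z then (1:ℝ) else 0) * (x w * x z)
          - (if w = z then (2:ℝ) * (x w * x z) else 0) := by
      intro z
      rw [hdist w z]
      by_cases h1 : f w = f z <;> by_cases h2 : w = z <;> simp [h1, h2] <;> ring
    rw [Finset.sum_congr rfl fun z _ => hterm z, Finset.sum_sub_distrib, Finset.sum_add_distrib,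
      Finset.sum_ite_eq univ w (fun z => (2:ℝ) * (x w * x z))]
    simp
  have hsum2 : ∑ w, ∑ z, (G.dist w z : ℝ) * (x w * x z) = S * S + E - 2 * X2 := by
    rw [Finset.sum_congr rfl fun w _ => hD w]
    rw [Finset.sum_sub_distrib, Finset.sum_add_distrib]
    congr 1
    · congr 1
      calc ∑ w, ∑ z, x w * x z = ∑ w, x w * S := by
            exact Finset.sum_congr rfl fun w _ => by rw [Finset.mul_sum]
        _ = S * S := by rw [← Finset.sum_mul]
    · rw [← Finset.mul_sum]
      congr 1
      exact Finset.sum_congr rfl fun w _ => by ring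
  have hEeq : E = ∑ c : Fin χ, (T c) ^ 2 := by
    calc E = ∑ w, x w * T (f w) := by
          apply Finset.sum_congr rfl
          intro w _
          rw [Finset.mul_sum]
          apply Finset.sum_congr rfl
          intro z _
          by_cases h : f w = f z
          · rw [if_pos h, if_pos h.symm]; ring
          · rw [if_neg h, if_neg (Ne.symm h)]; ring
      _ = ∑ c : Fin χ, ∑ w ∈ univ.filter (fun w => f w = c), x w * T (f w) :=
          (Finset.sum_fiberwise _ _ _).symm
      _ = ∑ c : Fin χ, (T c) ^ 2 := by
          apply Finset.sum_congr rfl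
          intro c _
          calc ∑ w ∈ univ.filter (fun w => f w = c), x w * T (f w)
              = ∑ w ∈ univ.filter (fun w => f w = c), x w * T c :=
                Finset.sum_congr rfl fun w hw => by rw [(Finset.mem_filter.mp hw).2]
            _ = (∑ w ∈ univ.filter (fun w => f w = c), x w) * T c := (Finset.sum_mul _ _ _).symm
            _ = T c * T c := by rw [Finset.sum_filter]
            _ = (T c) ^ 2 := (sq (T c)).symm
  have hEnn : 0 ≤ E := by
    rw [hEeq]
    exact Finset.sum_nonneg fun c _ => sq_nonneg _
  have hTrsum : ∑ w, (transmission G w : ℝ) * x w ^ 2 ≤ ((n : ℝ) + s - 2) * X2 := by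
    rw [hX2, Finset.mul_sum]
    apply Finset.sum_le_sum
    intro w _
    rw [hTr w]
    exact mul_le_mul_of_nonneg_right (by have := hL w; linarith) (sq_nonneg _)
  have hdot : x ⬝ᵥ x = X2 := by
    show (∑ w, x w * x w) = X2
    rw [hX2]
    exact Finset.sum_congr rfl fun w _ => (sq (x w)).symm
  rw [hQ, hsum2, hdot]
  have hSnn : 0 ≤ S * S := mul_self_nonneg S
  linarith

theorem stmt15' {χ : ℕ} (hn : 3 ≤ n) (hχ2 : 2 ≤ χ) (hχn : χ ≤ n - 1) :
    (∀ G : SimpleGraph (Fin n), G.Connected → G.chromaticNumber = χ →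
      (n : ℝ) + (((n + χ - 1) / χ : ℕ) : ℝ) ≤ DLeig G 1) ∧
    (∀ G : SimpleGraph (Fin n), G.Connected → G.chromaticNumber = χ →
      (∃ f : Fin n → Fin χ,
        (∀ u v, G.Adj u v ↔ f u ≠ f v) ∧
        (∀ c : Fin χ, (Finset.univ.filter (fun v => f v = c)).card = n / χ ∨
          (Finset.univ.filter (fun v => f v = c)).card = (n + χ - 1) / χ)) →
      DLeig G 1 = (n : ℝ) + (((n + χ - 1) / χ : ℕ) : ℝ)) := by
  constructor
  · intro G hc hchrom
    exact part1 hn hχ2 hχn hc hchrom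
  · rintro G hc hchrom ⟨f, hadj, hcards⟩
    have hχ : 0 < χ := by omega
    set s : ℕ := (n + χ - 1) / χ with hs
    have hdivle : n / χ ≤ s := Nat.div_le_div_right (by omega)
    have hs1 : 1 ≤ n / χ := (Nat.one_le_div_iff hχ).mpr (by omega)
    have hne : ∀ c : Fin χ, ∃ w, f w = c := by
      intro c
      have h1 : 1 ≤ (univ.filter (fun v => f v = c)).card := by
        rcases hcards c with h | h <;> rw [h] <;> omega
      obtain ⟨w, hw⟩ := Finset.card_pos.mp h1
      exact ⟨w, (Finset.mem_filter.mp hw).2⟩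
    have hdist := dist_exact hχ2 f hadj hne
    have hL : ∀ w : Fin n, (∑ z : Fin n, (if f z = f w then (1:ℝ) else 0)) ≤ (s : ℝ) := by
      intro w
      rw [Finset.sum_boole]
      have : (univ.filter (fun z => f z = f w)).card ≤ s := by
        rcases hcards (f w) with h | h <;> rw [h] <;> omega
      exact_mod_cast this
    apply le_antisymm
    · have hub := maxRoot_le_of_quadform (A := distLap G) (by omega) distLap_isHermitian
        ((n : ℝ) + (s : ℝ)) (quad_bound f (s : ℝ) hdist hL)
      exact hub
    · exact part1 hn hχ2 hχn hc hchrom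

end Aux

/-- Among all connected graphs on `n ≥ 3` vertices with chromatic number `χ`
(`2 ≤ χ ≤ n − 1`), the minimum of the largest distance Laplacian eigenvalue is
`n + ⌈n/χ⌉`, and it is attained by every complete `χ`-partite graph all of whose
part sizes lie in `{⌊n/χ⌋, ⌈n/χ⌉}`.  Here `⌈n/χ⌉ = (n + χ - 1) / χ`. -/
theorem stmt15 {n χ : ℕ} (hn : 3 ≤ n) (hχ2 : 2 ≤ χ) (hχn : χ ≤ n - 1) :
    (∀ G : SimpleGraph (Fin n), G.Connected → G.chromaticNumber = χ →
      (n : ℝ) + (((n + χ - 1) / χ : ℕ) : ℝ) ≤ DLeig G 1) ∧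
    (∀ G : SimpleGraph (Fin n), G.Connected → G.chromaticNumber = χ →
      (∃ f : Fin n → Fin χ,
        (∀ u v, G.Adj u v ↔ f u ≠ f v) ∧
        (∀ c : Fin χ, (Finset.univ.filter (fun v => f v = c)).card = n / χ ∨
          (Finset.univ.filter (fun v => f v = c)).card = (n + χ - 1) / χ)) →
      DLeig G 1 = (n : ℝ) + (((n + χ - 1) / χ : ℕ) : ℝ)) := by
  exact stmt15' hn hχ2 hχn
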